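/- Suppose the point of C(S) closest to the origin is nonzero, and suppose there exists a real number λ > 0 such that λ·(e₁ + e₂ + ⋯ + e_{M−1} − (M−1)e_M) ∈ C(S). Then the directed graph G(S) is connected: for any two vertices u, v ∈ {1,…,M} there is a finite sequence u = k₀, k₁, …, k_s = v such that for each l either (k_l, k_{l+1}) ∈ S or (k_{l+1}, k_l) ∈ S. -/

import Mathlib

section ConnAux

variable {N : Type*}

/-- Undirected reachability in the directed graph given by `S`. -/
def Conn (S : Finset (N × N)) (u v : N) : Prop :=
  ∃ (s : ℕ) (k : ℕ → N), k 0 = u ∧ k s = v ∧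
    ∀ l < s, (k l, k (l + 1)) ∈ S ∨ (k (l + 1), k l) ∈ S

theorem conn_refl (S : Finset (N × N)) (u : N) : Conn S u u :=
  ⟨0, fun _ => u, rfl, rfl, fun l hl => absurd hl (by omega)⟩

theorem conn_symm {S : Finset (N × N)} {u v : N} (h : Conn S u v) : Conn S v u := by
  obtain ⟨s, k, h0, hs, hk⟩ := h
  refine ⟨s, fun l => k (s - l), by simpa using hs, by simpa using h0, ?_⟩
  intro l hl
  have hsl : s - l = (s - (l + 1)) + 1 := by omega
  simp only [hsl]
  exact (hk (s - (l + 1)) (by omega)).symm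

theorem conn_trans {S : Finset (N × N)} {u v w : N}
    (h1 : Conn S u v) (h2 : Conn S v w) : Conn S u w := by
  obtain ⟨s, k, h0, hs, hk⟩ := h1
  obtain ⟨t, k', h0', ht', hk'⟩ := h2
  refine ⟨s + t, fun l => if l < s then k l else k' (l - s), ?_, ?_, ?_⟩
  · by_cases h : 0 < s
    · simpa [h] using h0
    · have hs0 : s = 0 := by omega
      subst hs0
      have hvu : v = u := by rw [← h0, ← hs]
      simpa [hvu] using h0'
  · have h : ¬ (s + t < s) := by omega
    show (if s + t < s then k (s + t) else k' (s + t - s)) = w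
    rw [if_neg h, Nat.add_sub_cancel_left]
    exact ht' 
  · intro l hl
    by_cases h : l < s
    · have hkl1 : (if l + 1 < s then k (l + 1) else k' (l + 1 - s)) = k (l + 1) := by
        by_cases h2 : l + 1 < s
        · simp [h2]
        · have : l + 1 = s := by omega
          simp [h2, this, h0', ← hs]
      simp only [h, if_pos, hkl1]
      exact hk l h
    · have h1 : ¬ (l + 1 < s) := by omega
      have h2 : l + 1 - s = (l - s) + 1 := by omega
      simp only [h, h1, if_neg, h2]
      exact hk' (l - s) (by omega)

theorem conn_of_mem {S : Finset (N × N)} {a b : N} (h : (a, b) ∈ S) : Conn S a b := by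
  refine ⟨1, fun l => if l = 0 then a else b, by simp, by simp, ?_⟩
  intro l hl
  have : l = 0 := by omega
  subst this
  simpa using Or.inl h

end ConnAux

/-- If the point of C(S) closest to the origin is nonzero and the ray
ℝ₊(e₁ + ⋯ + e_{M−1} − (M−1)e_M) meets C(S), then the directed graph G(S) is connected
(disregarding orientation of the edges). -/
theorem stmt2 {V : Type*} [NormedAddCommGroup V] [InnerProductSpace ℝ V]
    (n : ℕ) (hn : 1 ≤ n) (e : Fin (n + 1) → V)
    (he : ∀ i, e i ≠ 0)
    (horth : ∀ i j, i ≠ j → inner ℝ (e i) (e j) = (0 : ℝ))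
    (S : Finset (Fin (n + 1) × Fin (n + 1))) (hS : S.Nonempty)
    (β : V)
    (hmem : β ∈ convexHull ℝ
      ((fun p : Fin (n + 1) × Fin (n + 1) => e p.1 - e p.2) '' ↑S))
    (hmin : ∀ v ∈ convexHull ℝ
      ((fun p : Fin (n + 1) × Fin (n + 1) => e p.1 - e p.2) '' ↑S), ‖β‖ ≤ ‖v‖)
    (hβ : β ≠ 0)
    (hray : ∃ lam : ℝ, 0 < lam ∧
      lam • ((∑ i : Fin n, e i.castSucc) - (n : ℝ) • e (Fin.last n)) ∈
        convexHull ℝ ((fun p : Fin (n + 1) × Fin (n + 1) => e p.1 - e p.2) '' ↑S)) :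
    ∀ u v : Fin (n + 1), ∃ (s : ℕ) (k : ℕ → Fin (n + 1)),
      k 0 = u ∧ k s = v ∧ ∀ l < s, (k l, k (l + 1)) ∈ S ∨ (k (l + 1), k l) ∈ S := by
  classical
  obtain ⟨lam, hlam, hx⟩ := hray
  set f : Fin (n + 1) × Fin (n + 1) → V := fun p => e p.1 - e p.2 with hf
  set z : V := (∑ i : Fin n, e i.castSucc) - (n : ℝ) • e (Fin.last n) with hz
  rw [← Finset.coe_image] at hx
  obtain ⟨w, hw0, hw1, hwx⟩ := Finset.mem_convexHull.mp hx
  rw [Finset.centerMass_eq_of_sum_1 _ _ hw1] at hwx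
  -- main claim: every vertex connects to the last vertex
  have key : ∀ u : Fin (n + 1), Conn S u (Fin.last n) := by
    intro u
    by_contra hu
    set A : Finset (Fin (n + 1)) :=
      Finset.univ.filter (fun i => Conn S i (Fin.last n)) with hA
    have hlastA : Fin.last n ∈ A := by
      simp [hA, conn_refl]
    have huA : u ∉ A := by
      simp [hA, hu]
    -- the linear functional
    set φ : V →L[ℝ] ℝ := ∑ i ∈ A, (‖e i‖ ^ 2)⁻¹ • innerSL ℝ (e i) with hφ
    have hφe : ∀ a, φ (e a) = if a ∈ A then 1 else 0 := by
      intro a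
      have h1 : φ (e a) = ∑ i ∈ A, (‖e i‖ ^ 2)⁻¹ * inner ℝ (e i) (e a) := by
        simp [hφ, ContinuousLinearMap.sum_apply, smul_eq_mul]
      rw [h1]
      have h2 : ∀ i ∈ A, (‖e i‖ ^ 2)⁻¹ * inner ℝ (e i) (e a)
          = if i = a then (1 : ℝ) else 0 := by
        intro i _
        by_cases hia : i = a
        · subst hia
          rw [real_inner_self_eq_norm_sq]
          rw [if_pos rfl, inv_mul_cancel₀]
          exact pow_ne_zero _ (norm_ne_zero_iff.mpr (he i))
        · rw [horth i a hia, if_neg hia, mul_zero]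
      rw [Finset.sum_congr rfl h2, Finset.sum_ite_eq' A a (fun _ => (1 : ℝ))]
    -- φ vanishes on each generator
    have hgen : ∀ y ∈ S.image f, φ y = 0 := by
      intro y hy
      obtain ⟨p, hp, rfl⟩ := Finset.mem_image.mp hy
      have hconn : Conn S p.1 p.2 := conn_of_mem hp
      have hiff : (p.1 ∈ A ↔ p.2 ∈ A) := by
        simp only [hA, Finset.mem_filter, Finset.mem_univ, true_and]
        exact ⟨fun h => conn_trans (conn_symm hconn) h, fun h => conn_trans hconn h⟩
      have : φ (f p) = φ (e p.1) - φ (e p.2) := by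
        simp [hf, map_sub]
      rw [this, hφe, hφe]
      by_cases h1 : p.1 ∈ A
      · rw [if_pos h1, if_pos (hiff.mp h1), sub_self]
      · rw [if_neg h1, if_neg (fun h => h1 (hiff.mpr h)), sub_self]
    -- φ of the convex combination is 0
    have hφx0 : φ (lam • z) = 0 := by
      rw [← hwx]
      rw [map_sum]
      refine Finset.sum_eq_zero fun y hy => ?_
      simp only [id_eq, map_smul]
      rw [hgen y hy, smul_zero]
    -- compute φ z directly
    have hφz : φ z = (∑ j : Fin n, if j.castSucc ∈ A then (1 : ℝ) else 0) - n := by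
      rw [hz, map_sub, map_sum, map_smul]
      simp only [hφe]
      rw [if_pos hlastA]
      simp
    -- bound the sum
    have hune : u ≠ Fin.last n := fun h => hu (h ▸ conn_refl S _)
    obtain ⟨j0, hj0⟩ : ∃ j0 : Fin n, j0.castSucc = u := by
      rcases Fin.eq_castSucc_or_eq_last u with ⟨j, hj⟩ | h
      · exact ⟨j, hj.symm⟩
      · exact absurd h hune
    have hsum : (∑ j : Fin n, if j.castSucc ∈ A then (1 : ℝ) else 0)
        ≤ (n : ℝ) - 1 := by
      rw [Finset.sum_boole]
      have hsub : Finset.univ.filter (fun j : Fin n => j.castSucc ∈ A)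
          ⊆ Finset.univ.erase j0 := by
        intro j hj
        simp only [Finset.mem_filter] at hj
        refine Finset.mem_erase.mpr ⟨?_, Finset.mem_univ _⟩
        rintro rfl
        exact huA (hj0 ▸ hj.2)
      have hcard := Finset.card_le_card hsub
      rw [Finset.card_erase_of_mem (Finset.mem_univ _), Finset.card_univ,
        Fintype.card_fin] at hcard
      have : ((Finset.univ.filter (fun j : Fin n => j.castSucc ∈ A)).card : ℝ)
          ≤ ((n - 1 : ℕ) : ℝ) := Nat.cast_le.mpr hcard
      rw [Nat.cast_sub hn] at this
      simpa using this
    have hφzle : φ z ≤ -1 := by rw [hφz]; linarith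
    have : lam * φ z = 0 := by
      rw [← hφx0, map_smul, smul_eq_mul]
    nlinarith
  intro u v
  exact conn_trans (key u) (conn_symm (key v))
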